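/- Let p₁, p₂, p₃ ∈ ℂ³ satisfy ⟨pᵢ, pᵢ⟩ < 0 for i = 1, 2, 3, and write gᵢⱼ := ⟨pᵢ, pⱼ⟩. Then Re(−g₁₂·g₂₃·g₃₁) ≥ 0. (This is the positivity of the real part needed to define the area of an oriented geodesic triangle in the complex hyperbolic plane as ½·arg(−g₁₂·g₂₃·g₃₁).) -/

import Mathlib

/-- The Hermitian form of signature `(+ + −)` on `ℂ³`:
`⟨u, v⟩ = u 0 * conj (v 0) + u 1 * conj (v 1) - u 2 * conj (v 2)`. -/
noncomputable def herm (u v : Fin 3 → ℂ) : ℂ :=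
  u 0 * (starRingEnd ℂ) (v 0) + u 1 * (starRingEnd ℂ) (v 1) - u 2 * (starRingEnd ℂ) (v 2)

private lemma herm_conj (u v : Fin 3 → ℂ) :
    (starRingEnd ℂ) (herm u v) = herm v u := by
  simp only [herm, map_sub, map_add, map_mul, Complex.conj_conj]
  ring

private lemma herm_self (u : Fin 3 → ℂ) :
    herm u u = ((Complex.normSq (u 0) + Complex.normSq (u 1) - Complex.normSq (u 2) : ℝ) : ℂ) := by
  simp only [herm, Complex.mul_conj]
  push_cast
  ring

private lemma herm_self_re (u : Fin 3 → ℂ) : herm u u = ((herm u u).re : ℂ) := by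
  rw [herm_self]
  norm_num

private lemma lagrange (x y a b : ℂ) :
    Complex.normSq (x * (starRingEnd ℂ) a + y * (starRingEnd ℂ) b)
      ≤ (Complex.normSq x + Complex.normSq y) * (Complex.normSq a + Complex.normSq b) := by
  have h := Complex.normSq_nonneg (x * b - y * a)
  have key : Complex.normSq (x * (starRingEnd ℂ) a + y * (starRingEnd ℂ) b)
      + Complex.normSq (x * b - y * a)
      = (Complex.normSq x + Complex.normSq y) * (Complex.normSq a + Complex.normSq b) := by
    simp only [Complex.normSq_apply, Complex.add_re, Complex.add_im, Complex.sub_re,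
      Complex.sub_im, Complex.mul_re, Complex.mul_im, Complex.conj_re, Complex.conj_im]
    ring
  linarith

private lemma perp_nonneg (p w : Fin 3 → ℂ) (hp : (herm p p).re < 0) (hw : herm w p = 0) :
    0 ≤ (herm w w).re := by
  have hp' : Complex.normSq (p 0) + Complex.normSq (p 1) - Complex.normSq (p 2) < 0 := by
    rw [herm_self] at hp
    simpa using hp
  have hz : w 2 * (starRingEnd ℂ) (p 2)
      = w 0 * (starRingEnd ℂ) (p 0) + w 1 * (starRingEnd ℂ) (p 1) := by
    simp only [herm] at hw
    linear_combination -hw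
  have h2 : Complex.normSq (w 2) * Complex.normSq (p 2)
      = Complex.normSq (w 0 * (starRingEnd ℂ) (p 0) + w 1 * (starRingEnd ℂ) (p 1)) := by
    rw [← hz, Complex.normSq_mul, Complex.normSq_conj]
  have h3 := lagrange (w 0) (w 1) (p 0) (p 1)
  rw [herm_self]
  simp only [Complex.ofReal_re]
  nlinarith [Complex.normSq_nonneg (w 0), Complex.normSq_nonneg (w 1),
    Complex.normSq_nonneg (w 2), Complex.normSq_nonneg (p 0), Complex.normSq_nonneg (p 1),
    mul_nonneg (add_nonneg (Complex.normSq_nonneg (w 0)) (Complex.normSq_nonneg (w 1)))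
      (by linarith [Complex.normSq_nonneg (p 0), Complex.normSq_nonneg (p 1)] :
        (0:ℝ) ≤ Complex.normSq (p 2) - Complex.normSq (p 0) - Complex.normSq (p 1))]
private lemma herm_cs (p w w' : Fin 3 → ℂ) (hp : (herm p p).re < 0)
    (hw : herm w p = 0) (hw' : herm w' p = 0) :
    Complex.normSq (herm w w') ≤ (herm w w).re * (herm w' w').re := by
  have hq : 0 ≤ (herm w w).re := perp_nonneg p w hp hw
  have hq' : 0 ≤ (herm w' w').re := perp_nonneg p w' hp hw'
  have H : ∀ l : ℝ, 0 ≤ (herm w w).re - 2 * l * Complex.normSq (herm w w')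
      + l ^ 2 * Complex.normSq (herm w w') * (herm w' w').re := by
    intro l
    set c : ℂ := (l : ℂ) * herm w w' with hc
    have hperp : herm (fun i => w i - c * w' i) p = 0 := by
      have e : herm (fun i => w i - c * w' i) p = herm w p - c * herm w' p := by
        simp only [herm]
        ring
      rw [e, hw, hw']
      ring
    have hpos := perp_nonneg p _ hp hperp
    have e2 : herm (fun i => w i - c * w' i) (fun i => w i - c * w' i)
        = herm w w - (starRingEnd ℂ) c * herm w w' - c * ((starRingEnd ℂ) (herm w w'))
          + c * (starRingEnd ℂ) c * herm w' w' := by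
      rw [herm_conj w w']
      simp only [herm, map_sub, map_mul, Complex.conj_conj]
      ring
    rw [e2] at hpos
    have e3 : herm w w - (starRingEnd ℂ) c * herm w w' - c * ((starRingEnd ℂ) (herm w w'))
          + c * (starRingEnd ℂ) c * herm w' w'
        = ((herm w w).re : ℂ) - ((l * Complex.normSq (herm w w') : ℝ) : ℂ)
          - ((l * Complex.normSq (herm w w') : ℝ) : ℂ)
          + ((l ^ 2 * Complex.normSq (herm w w') * (herm w' w').re : ℝ) : ℂ) := by
      rw [hc, herm_self_re w, herm_self_re w']
      apply Complex.ext <;>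
        simp only [Complex.normSq_apply, Complex.mul_re, Complex.mul_im, Complex.sub_re,
          Complex.sub_im, Complex.add_re, Complex.add_im, Complex.conj_re, Complex.conj_im,
          Complex.ofReal_re, Complex.ofReal_im, map_mul, Complex.conj_ofReal] <;>
        ring
    rw [e3] at hpos
    simp only [Complex.add_re, Complex.sub_re, Complex.ofReal_re] at hpos
    linarith
  rcases eq_or_lt_of_le hq' with h0 | h0
  · -- (herm w' w').re = 0
    by_contra hlt
    push_neg at hlt
    have ht0 : 0 < Complex.normSq (herm w w') := by nlinarith
    have hH := H (((herm w w).re + 1) / (2 * Complex.normSq (herm w w')))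
    rw [← h0] at hH
    have heq : 2 * (((herm w w).re + 1) / (2 * Complex.normSq (herm w w')))
        * Complex.normSq (herm w w') = (herm w w).re + 1 := by
      field_simp
    rw [mul_zero] at hH
    linarith [hH, heq]
  · have key := H (1 / (herm w' w').re)
    have key2 : 0 ≤ ((herm w w).re - 2 * (1 / (herm w' w').re) * Complex.normSq (herm w w')
        + (1 / (herm w' w').re) ^ 2 * Complex.normSq (herm w w') * (herm w' w').re)
        * (herm w' w').re := mul_nonneg key (le_of_lt h0)
    have key3 : ((herm w w).re - 2 * (1 / (herm w' w').re) * Complex.normSq (herm w w')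
        + (1 / (herm w' w').re) ^ 2 * Complex.normSq (herm w w') * (herm w' w').re)
        * (herm w' w').re
        = (herm w w).re * (herm w' w').re - Complex.normSq (herm w w') := by
      field_simp
      ring
    linarith [key3 ▸ key2]

set_option maxHeartbeats 2000000

/-- For negative vectors `p₁, p₂, p₃` of the form of signature `(2,1)`,
writing `gᵢⱼ = ⟨pᵢ, pⱼ⟩`, one has `Re (−g₁₂·g₂₃·g₃₁) ≥ 0`. -/
theorem re_neg_triple_product_nonneg (p₁ p₂ p₃ : Fin 3 → ℂ)
    (h₁ : (herm p₁ p₁).re < 0) (h₂ : (herm p₂ p₂).re < 0) (h₃ : (herm p₃ p₃).re < 0) :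
    0 ≤ (-(herm p₁ p₂ * herm p₂ p₃ * herm p₃ p₁)).re := by
  set n := (herm p₁ p₁).re with hn
  have hN : herm p₁ p₁ = (n : ℂ) := herm_self_re p₁
  set w₂ : Fin 3 → ℂ := fun i => herm p₁ p₁ * p₂ i - herm p₂ p₁ * p₁ i with hw₂
  set w₃ : Fin 3 → ℂ := fun i => herm p₁ p₁ * p₃ i - herm p₃ p₁ * p₁ i with hw₃
  have hperp₂ : herm w₂ p₁ = 0 := by
    rw [hw₂]; simp only [herm]; ring
  have hperp₃ : herm w₃ p₁ = 0 := by
    rw [hw₃]; simp only [herm]; ring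
  have hs : herm w₂ w₃
      = herm p₁ p₁ * (herm p₁ p₁ * herm p₂ p₃
        - herm p₂ p₁ * (starRingEnd ℂ) (herm p₃ p₁)) := by
    rw [hw₂, hw₃]
    simp only [herm, map_sub, map_add, map_mul, Complex.conj_conj]
    ring
  have hs₂ : herm w₂ w₂
      = herm p₁ p₁ * (herm p₁ p₁ * herm p₂ p₂
        - herm p₂ p₁ * (starRingEnd ℂ) (herm p₂ p₁)) := by
    rw [hw₂]
    simp only [herm, map_sub, map_add, map_mul, Complex.conj_conj]
    ring
  have hs₃ : herm w₃ w₃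
      = herm p₁ p₁ * (herm p₁ p₁ * herm p₃ p₃
        - herm p₃ p₁ * (starRingEnd ℂ) (herm p₃ p₁)) := by
    rw [hw₃]
    simp only [herm, map_sub, map_add, map_mul, Complex.conj_conj]
    ring
  have hq2 : (herm w₂ w₂).re
      = n * (n * (herm p₂ p₂).re - Complex.normSq (herm p₂ p₁)) := by
    rw [hs₂, hN, herm_self_re p₂, Complex.mul_conj]
    norm_cast
  have hq3 : (herm w₃ w₃).re
      = n * (n * (herm p₃ p₃).re - Complex.normSq (herm p₃ p₁)) := by
    rw [hs₃, hN, herm_self_re p₃, Complex.mul_conj]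
    norm_cast
  have hcs := herm_cs p₁ w₂ w₃ h₁ hperp₂ hperp₃
  have hq2n : 0 ≤ (herm w₂ w₂).re := perp_nonneg p₁ w₂ h₁ hperp₂
  have hq3n : 0 ≤ (herm w₃ w₃).re := perp_nonneg p₁ w₃ h₁ hperp₃
  have key : ((n : ℂ)) ^ 2 * (herm p₁ p₂ * herm p₂ p₃ * herm p₃ p₁)
      = (starRingEnd ℂ) (herm p₂ p₁) * herm p₃ p₁ * herm w₂ w₃
        + (n : ℂ) * (herm p₂ p₁ * (starRingEnd ℂ) (herm p₂ p₁))
          * (herm p₃ p₁ * (starRingEnd ℂ) (herm p₃ p₁)) := by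
    rw [hs, ← hN, show herm p₁ p₂ = (starRingEnd ℂ) (herm p₂ p₁) from (herm_conj p₂ p₁).symm]
    ring
  have keyre : n ^ 2 * (herm p₁ p₂ * herm p₂ p₃ * herm p₃ p₁).re
      = ((starRingEnd ℂ) (herm p₂ p₁) * herm p₃ p₁ * herm w₂ w₃).re
        + n * (Complex.normSq (herm p₂ p₁) * Complex.normSq (herm p₃ p₁)) := by
    have hkr := congrArg Complex.re key
    rw [Complex.mul_conj, Complex.mul_conj] at hkr
    rw [show ((n : ℂ)) ^ 2 = ((n ^ 2 : ℝ) : ℂ) by push_cast; ring] at hkr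
    rw [Complex.re_ofReal_mul] at hkr
    rw [hkr, Complex.add_re]
    congr 1
    rw [show (n : ℂ) * (Complex.normSq (herm p₂ p₁) : ℂ) * (Complex.normSq (herm p₃ p₁) : ℂ)
      = ((n * (Complex.normSq (herm p₂ p₁) * Complex.normSq (herm p₃ p₁)) : ℝ) : ℂ) by
        push_cast; ring]
    exact Complex.ofReal_re _
  -- bounds
  set nA := Complex.normSq (herm p₂ p₁) with hnA
  set nB := Complex.normSq (herm p₃ p₁) with hnB
  have hnA0 : 0 ≤ nA := Complex.normSq_nonneg _
  have hnB0 : 0 ≤ nB := Complex.normSq_nonneg _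
  have hb2 : (herm w₂ w₂).re ≤ -n * nA := by
    rw [hq2]
    nlinarith [mul_nonneg (mul_self_nonneg n) (neg_nonneg.mpr h₂.le)]
  have hb3 : (herm w₃ w₃).re ≤ -n * nB := by
    rw [hq3]
    nlinarith [mul_nonneg (mul_self_nonneg n) (neg_nonneg.mpr h₃.le)]
  have hq23 : (herm w₂ w₂).re * (herm w₃ w₃).re ≤ (-n * nA) * (-n * nB) :=
    mul_le_mul hb2 hb3 hq3n (by nlinarith)
  set R := ((starRingEnd ℂ) (herm p₂ p₁) * herm p₃ p₁ * herm w₂ w₃).re with hR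
  have hR2 : R ^ 2 ≤ nA * nB * Complex.normSq (herm w₂ w₃) := by
    have e : Complex.normSq ((starRingEnd ℂ) (herm p₂ p₁) * herm p₃ p₁ * herm w₂ w₃)
        = nA * nB * Complex.normSq (herm w₂ w₃) := by
      rw [Complex.normSq_mul, Complex.normSq_mul, Complex.normSq_conj]
    rw [← e, Complex.normSq_apply]
    nlinarith [sq_nonneg (((starRingEnd ℂ) (herm p₂ p₁) * herm p₃ p₁ * herm w₂ w₃).im)]
  have hRsq : R ^ 2 ≤ (n * (nA * nB)) ^ 2 := by
    nlinarith [mul_le_mul_of_nonneg_left hq23 (mul_nonneg hnA0 hnB0),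
      Complex.normSq_nonneg (herm w₂ w₃), mul_nonneg hnA0 hnB0]
  have hRM : R ≤ -n * (nA * nB) := by
    nlinarith [hRsq, mul_nonneg (neg_nonneg.mpr h₁.le) (mul_nonneg hnA0 hnB0)]
  have hn2 : 0 < n * n := mul_pos_of_neg_of_neg h₁ h₁
  rw [Complex.neg_re]
  nlinarith [keyre, hRM, hn2]
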